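/- Let M be a real m×a matrix, L a real m×b matrix, and P a real m×m matrix satisfying Pᵀ = P, P·P = P, P·M = M, and P = M·X for some a×m matrix X (so that P is the orthogonal projection onto the column space of M). Let Q = [M L] be the m×(a+b) matrix obtained by concatenating the columns of M and L. Then det(QᵀQ) = det(MᵀM) · det( ((I − P)L)ᵀ · ((I − P)L) ). Equivalently, vol(Q) = vol(M) · vol((I − P)L), where vol(A) := √(det(AᵀA)). -/

import Mathlib

open Matrix
/-- Lemma 5.2 of the paper: if `P` is the orthogonal projection onto the column space
of `M` (i.e. `Pᵀ = P`, `P² = P`, `PM = M`, and `P = MX` for some `X`), and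
`Q = [M L]`, then `det(QᵀQ) = det(MᵀM) · det(((I - P)L)ᵀ((I - P)L))`; equivalently
`vol(Q) = vol(M) · vol((I - P)L)`. -/
theorem det_gram_fromColumns_projection (m a b : ℕ)
    (M : Matrix (Fin m) (Fin a) ℝ) (L : Matrix (Fin m) (Fin b) ℝ)
    (P : Matrix (Fin m) (Fin m) ℝ)
    (hPsym : Pᵀ = P) (hPidem : P * P = P) (hPM : P * M = M)
    (hPX : ∃ X : Matrix (Fin a) (Fin m) ℝ, P = M * X) :
    ((Matrix.fromCols M L)ᵀ * Matrix.fromCols M L).det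
      = (Mᵀ * M).det *
        ((((1 : Matrix (Fin m) (Fin m) ℝ) - P) * L)ᵀ *
          (((1 : Matrix (Fin m) (Fin m) ℝ) - P) * L)).det := by
  obtain ⟨X, hX⟩ := hPX
  set N : Matrix (Fin m) (Fin b) ℝ := ((1 : Matrix (Fin m) (Fin m) ℝ) - P) * L with hN
  have hMP : Mᵀ * ((1 : Matrix (Fin m) (Fin m) ℝ) - P) = 0 := by
    have h1 : ((1 : Matrix (Fin m) (Fin m) ℝ) - P) * M = 0 := by
      rw [Matrix.sub_mul, Matrix.one_mul, hPM, sub_self]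
    have := congrArg Matrix.transpose h1
    simpa [Matrix.transpose_mul, Matrix.transpose_sub, hPsym] using this
  have hMN : Mᵀ * N = 0 := by
    rw [hN, ← Matrix.mul_assoc, hMP, Matrix.zero_mul]
  have hNM : Nᵀ * M = 0 := by
    have := congrArg Matrix.transpose hMN
    simpa [Matrix.transpose_mul] using this
  -- column operation: Q * U = [M N]
  have key : fromCols M L * fromBlocks (1 : Matrix (Fin a) (Fin a) ℝ) (-(X * L)) 0
      (1 : Matrix (Fin b) (Fin b) ℝ) = fromCols M N := by
    rw [fromCols_mul_fromBlocks]
    rw [hN, Matrix.sub_mul, Matrix.one_mul, hX, Matrix.mul_assoc]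
    simp [Matrix.mul_neg, sub_eq_neg_add]
  set U := fromBlocks (1 : Matrix (Fin a) (Fin a) ℝ) (-(X * L)) 0
      (1 : Matrix (Fin b) (Fin b) ℝ) with hU
  have hdetU : U.det = 1 := by
    rw [hU, Matrix.det_fromBlocks_zero₂₁]
    simp
  have h2 : (Uᵀ * ((fromCols M L)ᵀ * fromCols M L) * U).det
      = ((fromCols M L)ᵀ * fromCols M L).det := by
    rw [Matrix.det_mul, Matrix.det_mul, Matrix.det_transpose, hdetU]
    ring
  have h3 : Uᵀ * ((fromCols M L)ᵀ * fromCols M L) * U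
      = (fromCols M N)ᵀ * fromCols M N := by
    rw [← key]
    rw [Matrix.transpose_mul]
    simp only [Matrix.mul_assoc]
  rw [← h2, h3, transpose_fromCols, fromRows_mul_fromCols, hMN, hNM,
    Matrix.det_fromBlocks_zero₂₁]
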